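/- Fix m ≥ 1 and relative degrees r_1,…,r_m ≥ 1 with n = r_1+…+r_m; let A = blockdiag(A_1,…,A_m) ∈ ℝ^{n×n} and B = blockdiag(b_1,…,b_m) ∈ ℝ^{n×m} be the integrator system matrices, where A_j is the r_j×r_j nilpotent upper-shift matrix and b_j = e_{r_j}. Let t > 0, p ∈ [1,∞] with Hölder conjugate q, let ℓ^A, ℓ^B : [0,t] → ℝ_{>0} be continuous, let x₀^A, x₀^B ∈ ℝⁿ, and let X_t^A, X_t^B be the reach sets X_t^i := { exp(tA)x₀^i + ∫₀ᵗ exp(sA) B u(s) ds : u measurable, ‖u(s)‖_p ≤ ℓ^i(s) for all s ∈ [0,t] } for i ∈ {A, B}. Define c(t) := exp(tA)(x₀^A − x₀^B), G(s) := (ℓ^A(s)+ℓ^B(s)) exp(sA) B, and f₀(y) := ⟨c(t), y⟩ + ∫₀ᵗ ‖(G(s))ᵀ y‖_q ds. Let p̃* := min_{‖y‖₂ ≤ 1} f₀(y) and p* := min_{‖y‖₂ = 1} f₀(y). If p̃* < 0, then p̃* = p* < 0 and X_t^A ∩ X_t^B = ∅. -/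

import Mathlib

noncomputable section
open Matrix MeasureTheory TopologicalSpace Filter
open scoped ENNReal Pointwise

/-- The `r × r` nilpotent upper-shift matrix `N` with `N_{a,a+1} = 1`. -/
def shiftMat (r : ℕ) : Matrix (Fin r) (Fin r) ℝ :=
  fun a b => if (b : ℕ) = (a : ℕ) + 1 then 1 else 0

/-- `ξ(s) = (s^{r-1}/(r-1)!, …, s, 1)ᵀ ∈ ℝ^r`. -/
def xi (r : ℕ) (s : ℝ) : Fin r → ℝ :=
  fun a => s ^ (r - 1 - (a : ℕ)) / (Nat.factorial (r - 1 - (a : ℕ)))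

/-- Support function `h_K(y) = sup_{x ∈ K} ⟨y, x⟩` of a set `K`. -/
def sptFn {ι : Type*} [Fintype ι] (K : Set (ι → ℝ)) (y : ι → ℝ) : ℝ :=
  sSup ((fun x => y ⬝ᵥ x) '' K)

/-- The Euclidean (2-)norm on `ι → ℝ`. -/
def euclNorm {ι : Type*} [Fintype ι] (y : ι → ℝ) : ℝ :=
  Real.sqrt (∑ i, y i ^ 2)

/-- The `p`-norm on `ℝ^m`, `p ∈ [1,∞]`. -/
def pnorm (p : ℝ≥0∞) [Fact (1 ≤ p)] {m : ℕ} (u : Fin m → ℝ) : ℝ :=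
  ‖(WithLp.equiv p (Fin m → ℝ)).symm u‖

/-- The (forward) reach set at time `t` of `ẋ = Ax + Bu`, from initial condition
`x₀`, over measurable inputs selected from the set-valued uncertainty `U`. -/
def reachSet {N M : Type*} [Fintype N] [DecidableEq N] [Fintype M]
    (A : Matrix N N ℝ) (B : Matrix N M ℝ) (x0 : N → ℝ) (t : ℝ)
    (U : ℝ → Set (M → ℝ)) : Set (N → ℝ) :=
  {x | ∃ u : ℝ → M → ℝ, Measurable u ∧ (∀ s ∈ Set.Icc 0 t, u s ∈ U s) ∧
    x = NormedSpace.exp (t • A) *ᵥ x0 +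
      ∫ s in (0:ℝ)..t, NormedSpace.exp (s • A) *ᵥ (B *ᵥ u s)}

/-- Block-diagonal integrator state matrix `A = blockdiag(A_1,…,A_m)`. -/
def blkA {m : ℕ} (r : Fin m → ℕ) : Matrix (Σ j, Fin (r j)) (Σ j, Fin (r j)) ℝ :=
  fun p q => if p.1 = q.1 ∧ (q.2 : ℕ) = (p.2 : ℕ) + 1 then 1 else 0

/-- Block-diagonal integrator input matrix `B = blockdiag(b_1,…,b_m)`, `b_j = e_{r_j}`. -/
def blkB {m : ℕ} (r : Fin m → ℕ) : Matrix (Σ j, Fin (r j)) (Fin m) ℝ :=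
  fun p k => if p.1 = k ∧ (p.2 : ℕ) = r p.1 - 1 then 1 else 0

/-- Single-input integrator reach set with scalar input confined to `[α(s), β(s)]`. -/
def reachSet1 {r : ℕ} (x0 : Fin r → ℝ) (t : ℝ) (α β : ℝ → ℝ) : Set (Fin r → ℝ) :=
  {x | ∃ u : ℝ → ℝ, Measurable u ∧ (∀ s ∈ Set.Icc 0 t, u s ∈ Set.Icc (α s) (β s)) ∧
    x = NormedSpace.exp (t • shiftMat r) *ᵥ x0 + ∫ s in (0:ℝ)..t, u s • xi r s}

/-! ### Auxiliary lemmas -/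

section AuxLemmas

lemma pnorm_nonneg' (p : ℝ≥0∞) [Fact (1 ≤ p)] {m : ℕ} (u : Fin m → ℝ) : 0 ≤ pnorm p u :=
  norm_nonneg _

lemma pnorm_zero' (p : ℝ≥0∞) [Fact (1 ≤ p)] {m : ℕ} : pnorm p (0 : Fin m → ℝ) = 0 := by
  simp [pnorm]

lemma pnorm_smul' (p : ℝ≥0∞) [Fact (1 ≤ p)] {m : ℕ} (a : ℝ) (u : Fin m → ℝ) :
    pnorm p (a • u) = |a| * pnorm p u := by
  rw [pnorm, WithLp.equiv_symm_apply, WithLp.toLp_smul, norm_smul, Real.norm_eq_abs]; rfl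

lemma pnorm_sub_le' (p : ℝ≥0∞) [Fact (1 ≤ p)] {m : ℕ} (u v : Fin m → ℝ) :
    pnorm p (u - v) ≤ pnorm p u + pnorm p v := by
  rw [pnorm, WithLp.equiv_symm_apply, WithLp.toLp_sub]; exact norm_sub_le _ _

lemma pnorm_one_eq' {m : ℕ} (u : Fin m → ℝ) : pnorm 1 u = ∑ i, |u i| := by
  have h : ((1:ℝ≥0∞)).toReal = 1 := by simp
  rw [pnorm, PiLp.norm_eq_sum (by simp [h])]
  simp [h, Real.norm_eq_abs]

lemma pnorm_top_eq' {m : ℕ} (u : Fin m → ℝ) : pnorm ⊤ u = ‖u‖ := by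
  rw [pnorm, WithLp.equiv_symm_apply, PiLp.norm_toLp]

/-- **Hölder's inequality** for the `p`- and `q`-norms on `ℝ^m`. -/
lemma dotProduct_le_pnorm_mul_pnorm {m : ℕ} (p q : ℝ≥0∞) [Fact (1 ≤ p)] [Fact (1 ≤ q)]
    (hpq : p.HolderConjugate q) (v w : Fin m → ℝ) :
    v ⬝ᵥ w ≤ pnorm q v * pnorm p w := by
  rcases eq_or_ne p ⊤ with hp | hp
  · subst hp
    have hq : q = 1 := by
      have := (ENNReal.holderConjugate_iff.mp hpq)
      simp only [ENNReal.inv_top, zero_add, ENNReal.inv_eq_one] at this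
      exact this
    subst hq
    rw [pnorm_one_eq', pnorm_top_eq', dotProduct, Finset.sum_mul]
    refine Finset.sum_le_sum fun i _ => ?_
    calc v i * w i ≤ |v i| * |w i| := by
          rw [← abs_mul]; exact le_abs_self _
      _ ≤ |v i| * ‖w‖ := by
          refine mul_le_mul_of_nonneg_left ?_ (abs_nonneg _)
          exact (norm_le_pi_norm w i)
  · rcases eq_or_ne q ⊤ with hq | hq
    · subst hq
      have hp1 : p = 1 := by
        have := (ENNReal.holderConjugate_iff.mp hpq)
        simp only [ENNReal.inv_top, add_zero, ENNReal.inv_eq_one] at this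
        exact this
      subst hp1
      rw [pnorm_one_eq', pnorm_top_eq', dotProduct, mul_comm, Finset.sum_mul]
      refine Finset.sum_le_sum fun i _ => ?_
      calc v i * w i ≤ |w i| * |v i| := by
            rw [← abs_mul, mul_comm]; exact le_abs_self _
        _ ≤ |w i| * ‖v‖ := mul_le_mul_of_nonneg_left (norm_le_pi_norm v i) (abs_nonneg _)
    · -- both finite
      have hsum := (ENNReal.holderConjugate_iff.mp hpq)
      have hp0 : p ≠ 0 := (zero_lt_one.trans_le (Fact.out : (1:ℝ≥0∞) ≤ p)).ne'
      have hq0 : q ≠ 0 := (zero_lt_one.trans_le (Fact.out : (1:ℝ≥0∞) ≤ q)).ne'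
      have hp1 : 1 < p := by
        by_contra h
        push_neg at h
        have hpe : p = 1 := le_antisymm h Fact.out
        have := hsum
        rw [hpe] at this
        simp at this
        exact hq this
      have hq1 : 1 < q := by
        by_contra h
        push_neg at h
        have hqe : q = 1 := le_antisymm h Fact.out
        have := hsum
        rw [hqe] at this
        simp at this
        exact hp this
      have hconj : Real.HolderConjugate q.toReal p.toReal := by
        refine Real.holderConjugate_iff.mpr ⟨?_, ?_⟩
        · rw [← ENNReal.toReal_one]
          exact (ENNReal.toReal_lt_toReal (by simp) hq).mpr hq1
        · have h2 := congrArg ENNReal.toReal hsum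
          rw [ENNReal.toReal_add (by simp [hp0]) (by simp [hq0]), ENNReal.toReal_inv,
            ENNReal.toReal_inv, ENNReal.toReal_one] at h2
          linarith
      have key := Real.inner_le_Lp_mul_Lq Finset.univ v w hconj
      have hv : pnorm q v = (∑ i, |v i| ^ q.toReal) ^ (1 / q.toReal) := by
        rw [pnorm, PiLp.norm_eq_sum (ENNReal.toReal_pos hq0 hq)]
        simp only [WithLp.equiv_symm_apply, PiLp.toLp_apply, Real.norm_eq_abs]
      have hw : pnorm p w = (∑ i, |w i| ^ p.toReal) ^ (1 / p.toReal) := by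
        rw [pnorm, PiLp.norm_eq_sum (ENNReal.toReal_pos hp0 hp)]
        simp only [WithLp.equiv_symm_apply, PiLp.toLp_apply, Real.norm_eq_abs]
      rw [hv, hw, dotProduct]
      exact key

/-- Each coordinate is bounded by the `p`-norm. -/
lemma abs_apply_le_pnorm {m : ℕ} (p q : ℝ≥0∞) [Fact (1 ≤ p)] [Fact (1 ≤ q)]
    (hpq : p.HolderConjugate q) (u : Fin m → ℝ) (k : Fin m) :
    |u k| ≤ pnorm p u := by
  rcases le_or_gt (u k) 0 with h | h
  · have := dotProduct_le_pnorm_mul_pnorm p q hpq (Pi.single k (-1 : ℝ)) u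
    have hdot : (Pi.single k (-1 : ℝ)) ⬝ᵥ u = -(u k) := by
      simp [dotProduct, Pi.single_apply, Finset.sum_ite_eq']
    have hn : pnorm q (Pi.single k (-1 : ℝ)) = 1 := by
      rw [pnorm, WithLp.equiv_symm_apply, PiLp.norm_toLp_single]
      simp
    rw [hdot, hn, one_mul] at this
    rwa [abs_of_nonpos h]
  · have := dotProduct_le_pnorm_mul_pnorm p q hpq (Pi.single k (1 : ℝ)) u
    have hdot : (Pi.single k (1 : ℝ)) ⬝ᵥ u = u k := by
      simp [dotProduct, Pi.single_apply, Finset.sum_ite_eq']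
    have hn : pnorm q (Pi.single k (1 : ℝ)) = 1 := by
      rw [pnorm, WithLp.equiv_symm_apply, PiLp.norm_toLp_single]
      simp
    rw [hdot, hn, one_mul] at this
    rwa [abs_of_pos h]

lemma continuous_pnorm (p : ℝ≥0∞) [Fact (1 ≤ p)] {m : ℕ} :
    Continuous fun u : Fin m → ℝ => pnorm p u :=
  continuous_norm.comp (PiLp.continuous_toLp p _)

section Eucl
variable {ι : Type*} [Fintype ι]

lemma euclNorm_eq_norm (y : ι → ℝ) :
    euclNorm y = ‖(WithLp.equiv 2 (ι → ℝ)).symm y‖ := by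
  rw [PiLp.norm_eq_of_L2, euclNorm]
  congr 1
  refine Finset.sum_congr rfl fun i _ => ?_
  simp [Real.norm_eq_abs, sq_abs]

lemma euclNorm_nonneg' (y : ι → ℝ) : 0 ≤ euclNorm y := by
  rw [euclNorm_eq_norm]; exact norm_nonneg _

lemma euclNorm_smul' (a : ℝ) (y : ι → ℝ) : euclNorm (a • y) = |a| * euclNorm y := by
  rw [euclNorm_eq_norm, euclNorm_eq_norm, WithLp.equiv_symm_apply, WithLp.toLp_smul, norm_smul, Real.norm_eq_abs]

lemma euclNorm_eq_zero_iff (y : ι → ℝ) : euclNorm y = 0 ↔ y = 0 := by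
  rw [euclNorm_eq_norm, norm_eq_zero]
  constructor
  · intro h
    have := congrArg (WithLp.equiv 2 (ι → ℝ)) h
    simpa using this
  · rintro rfl
    simp

lemma euclNorm_single [DecidableEq ι] (i : ι) : euclNorm (Pi.single i (1:ℝ)) = 1 := by
  rw [euclNorm_eq_norm, WithLp.equiv_symm_apply, PiLp.norm_toLp_single]
  simp

lemma abs_dotProduct_le_euclNorm (c y : ι → ℝ) : |c ⬝ᵥ y| ≤ euclNorm c * euclNorm y := by
  rw [euclNorm_eq_norm, euclNorm_eq_norm]
  have h := abs_real_inner_le_norm ((WithLp.equiv 2 (ι → ℝ)).symm c) ((WithLp.equiv 2 (ι → ℝ)).symm y)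
  have he : (inner ℝ ((WithLp.equiv 2 (ι → ℝ)).symm c) ((WithLp.equiv 2 (ι → ℝ)).symm y) : ℝ)
      = c ⬝ᵥ y := by
    rw [PiLp.inner_apply, dotProduct]
    refine Finset.sum_congr rfl fun i _ => ?_
    simp [mul_comm]
  rwa [he] at h

end Eucl

lemma exp_smul_continuous {ι : Type*} [Fintype ι] [DecidableEq ι] (A : Matrix ι ι ℝ) :
    Continuous fun s : ℝ => NormedSpace.exp (s • A) := by
  letI : SeminormedRing (Matrix ι ι ℝ) := Matrix.linftyOpSemiNormedRing
  letI : NormedRing (Matrix ι ι ℝ) := Matrix.linftyOpNormedRing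
  letI : NormedAlgebra ℝ (Matrix ι ι ℝ) := Matrix.linftyOpNormedAlgebra
  letI : NormedAlgebra ℚ (Matrix ι ι ℝ) := NormedAlgebra.restrictScalars ℚ ℝ (Matrix ι ι ℝ)
  exact NormedSpace.exp_continuous.comp (continuous_id.smul continuous_const)

end AuxLemmas

/-- for integrator agents with `p`-norm-ball input uncertainties, if the
optimal value `p̃*` of the convexified problem is negative, then the convexification is
lossless (`p̃* = p* < 0`) and the reach sets are disjoint. -/
theorem convexified_neg_implies_lossless_and_disjoint (m : ℕ) (hm : 1 ≤ m)
    (r : Fin m → ℕ) (hr : ∀ j, 1 ≤ r j) (t : ℝ) (ht : 0 < t)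
    (p q : ℝ≥0∞) [Fact (1 ≤ p)] [Fact (1 ≤ q)] (hpq : p.HolderConjugate q)
    (lA lB : ℝ → ℝ) (hlA : ContinuousOn lA (Set.Icc 0 t))
    (hlB : ContinuousOn lB (Set.Icc 0 t))
    (hlApos : ∀ s ∈ Set.Icc (0:ℝ) t, 0 < lA s)
    (hlBpos : ∀ s ∈ Set.Icc (0:ℝ) t, 0 < lB s)
    (x0A x0B : (Σ j, Fin (r j)) → ℝ)
    (XA XB : Set ((Σ j, Fin (r j)) → ℝ))
    (hXA : XA = reachSet (blkA r) (blkB r) x0A t (fun s => {u | pnorm p u ≤ lA s}))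
    (hXB : XB = reachSet (blkA r) (blkB r) x0B t (fun s => {u | pnorm p u ≤ lB s}))
    (c : (Σ j, Fin (r j)) → ℝ)
    (hc : c = NormedSpace.exp (t • blkA r) *ᵥ (x0A - x0B))
    (G : ℝ → Matrix (Σ j, Fin (r j)) (Fin m) ℝ)
    (hG : ∀ s, G s = (lA s + lB s) • (NormedSpace.exp (s • blkA r) * blkB r))
    (f0 : ((Σ j, Fin (r j)) → ℝ) → ℝ)
    (hf0 : f0 = fun y => c ⬝ᵥ y + ∫ s in (0:ℝ)..t, pnorm q ((G s)ᵀ *ᵥ y))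
    (ptil pstar : ℝ) (hptil : ptil = sInf (f0 '' {y | euclNorm y ≤ 1}))
    (hpstar : pstar = sInf (f0 '' {y | euclNorm y = 1}))
    (hneg : ptil < 0) :
    ptil = pstar ∧ pstar < 0 ∧ XA ∩ XB = ∅ := by
  classical
  -- β-reduced formula for f0
  have hf0y : ∀ y, f0 y = c ⬝ᵥ y + ∫ s in (0:ℝ)..t, pnorm q ((G s)ᵀ *ᵥ y) := by
    intro y; rw [hf0]
  -- positive homogeneity of f0
  have hf0smul : ∀ (a : ℝ), 0 ≤ a → ∀ y, f0 (a • y) = a * f0 y := by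
    intro a ha y
    rw [hf0y, hf0y]
    have hpt : ∀ s, pnorm q ((G s)ᵀ *ᵥ (a • y)) = a * pnorm q ((G s)ᵀ *ᵥ y) := by
      intro s
      rw [Matrix.mulVec_smul, pnorm_smul', abs_of_nonneg ha]
    simp_rw [hpt]
    rw [intervalIntegral.integral_const_mul, dotProduct_smul, smul_eq_mul]
    ring
  have hf0zero : f0 0 = 0 := by
    have := hf0smul 0 le_rfl 0
    simpa using this
  -- lower bound for f0 on the unit ball
  have hlow : ∀ y, euclNorm y ≤ 1 → -euclNorm c ≤ f0 y := by
    intro y hy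
    rw [hf0y]
    have h2 := abs_dotProduct_le_euclNorm c y
    have h4 := neg_abs_le (c ⬝ᵥ y)
    have h3 : 0 ≤ ∫ s in (0:ℝ)..t, pnorm q ((G s)ᵀ *ᵥ y) :=
      intervalIntegral.integral_nonneg ht.le (fun s _ => pnorm_nonneg' q _)
    nlinarith [euclNorm_nonneg' c, euclNorm_nonneg' y]
  set T : Set ℝ := f0 '' {y | euclNorm y ≤ 1} with hT
  set S : Set ℝ := f0 '' {y | euclNorm y = 1} with hS
  have hTbdd : BddBelow T := by
    refine ⟨-euclNorm c, ?_⟩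
    rintro a ⟨y, hy, rfl⟩
    exact hlow y hy
  have hSsub : S ⊆ T := Set.image_mono (fun y hy => le_of_eq hy)
  have i0 : (Σ j, Fin (r j)) := ⟨⟨0, hm⟩, ⟨0, hr _⟩⟩
  have hSne : S.Nonempty := ⟨f0 (Pi.single i0 1), Pi.single i0 1, euclNorm_single i0, rfl⟩
  have hTne : T.Nonempty := hSne.mono hSsub
  have hSbdd : BddBelow S := hTbdd.mono hSsub
  have hle1 : ptil ≤ pstar := by
    rw [hptil, hpstar]
    exact csInf_le_csInf hTbdd hSne hSsub
  -- a witness with negative value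
  have hwit : ∃ y, euclNorm y ≤ 1 ∧ f0 y < 0 := by
    by_contra h
    push_neg at h
    have h0 : (0:ℝ) ≤ sInf T := by
      refine le_csInf hTne ?_
      rintro a ⟨y, hy, rfl⟩
      exact h y hy
    rw [hptil] at hneg
    linarith
  -- scaling negative points to the sphere
  have hscale : ∀ y, euclNorm y ≤ 1 → f0 y < 0 → ∃ z, euclNorm z = 1 ∧ f0 z ≤ f0 y := by
    intro y hy hfy
    have hy0 : y ≠ 0 := by
      rintro rfl
      rw [hf0zero] at hfy
      exact lt_irrefl 0 hfy
    have hny : 0 < euclNorm y := by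
      rcases (euclNorm_nonneg' y).lt_or_eq with h | h
      · exact h
      · exact absurd ((euclNorm_eq_zero_iff y).mp h.symm) hy0
    refine ⟨(euclNorm y)⁻¹ • y, ?_, ?_⟩
    · rw [euclNorm_smul', abs_of_nonneg (inv_nonneg.mpr hny.le)]
      field_simp
    · rw [hf0smul _ (inv_nonneg.mpr hny.le)]
      have h1 : 1 ≤ (euclNorm y)⁻¹ := (one_le_inv_iff₀.mpr ⟨hny, hy⟩)
      nlinarith
  have hle2 : pstar ≤ ptil := by
    by_contra hlt
    push_neg at hlt
    have hε0 : 0 < min (pstar - ptil) (-ptil) := lt_min (by linarith) (by linarith)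
    obtain ⟨a, haT, ha⟩ := exists_lt_of_csInf_lt hTne
      (show sInf T < ptil + min (pstar - ptil) (-ptil) by rw [← hptil]; linarith)
    have ha0 : a < 0 := by
      have := min_le_right (pstar - ptil) (-ptil)
      linarith
    obtain ⟨y, hy, rfl⟩ := haT
    obtain ⟨z, hz1, hzle⟩ := hscale y hy ha0
    have hps : pstar ≤ f0 z := by
      rw [hpstar]
      exact csInf_le hSbdd ⟨z, hz1, rfl⟩
    have := min_le_left (pstar - ptil) (-ptil)
    linarith
  have heqp : ptil = pstar := le_antisymm hle1 hle2
  refine ⟨heqp, heqp ▸ hneg, ?_⟩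
  -- disjointness
  obtain ⟨y, hy1, hfy⟩ := hwit
  rw [Set.eq_empty_iff_forall_notMem]
  rintro x ⟨hxA, hxB⟩
  rw [hXA] at hxA
  rw [hXB] at hxB
  obtain ⟨uA, huAm, huAc, hxAe⟩ := hxA

  obtain ⟨uB, huBm, huBc, hxBe⟩ := hxB
  set φA : ℝ → ((Σ j, Fin (r j)) → ℝ) :=
    fun s => NormedSpace.exp (s • blkA r) *ᵥ (blkB r *ᵥ uA s) with hφA
  set φB : ℝ → ((Σ j, Fin (r j)) → ℝ) :=
    fun s => NormedSpace.exp (s • blkA r) *ᵥ (blkB r *ᵥ uB s) with hφB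
  have hφAF : ∀ s, φA s = (NormedSpace.exp (s • blkA r) * blkB r) *ᵥ uA s := by
    intro s; rw [hφA]; simp only [Matrix.mulVec_mulVec]
  have hφBF : ∀ s, φB s = (NormedSpace.exp (s • blkA r) * blkB r) *ᵥ uB s := by
    intro s; rw [hφB]; simp only [Matrix.mulVec_mulVec]
  have hEc : Continuous fun s : ℝ => NormedSpace.exp (s • blkA r) :=
    exp_smul_continuous (blkA r)
  have hFc : Continuous fun s : ℝ => NormedSpace.exp (s • blkA r) * blkB r :=
    hEc.matrix_mul continuous_const
  have hentry : ∀ (i : Σ j, Fin (r j)) (k : Fin m),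
      Continuous fun s : ℝ => (NormedSpace.exp (s • blkA r) * blkB r) i k := fun i k =>
    (continuous_apply k).comp ((continuous_apply i).comp hFc)
  obtain ⟨K, hK⟩ := (isCompact_Icc (a := (0:ℝ)) (b := t)).exists_bound_of_continuousOn
    (f := fun s => ∑ i, ∑ k, |(NormedSpace.exp (s • blkA r) * blkB r) i k|)
    ((continuous_finset_sum _ fun i _ => continuous_finset_sum _ fun k _ =>
      (hentry i k).abs).continuousOn)
  have hKe : ∀ s ∈ Set.Icc (0:ℝ) t, ∀ (i : Σ j, Fin (r j)) (k : Fin m),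
      |(NormedSpace.exp (s • blkA r) * blkB r) i k| ≤ K := by
    intro s hs i k
    have h1 := hK s hs
    rw [Real.norm_eq_abs] at h1
    have h2 : |(NormedSpace.exp (s • blkA r) * blkB r) i k|
        ≤ ∑ i, ∑ k, |(NormedSpace.exp (s • blkA r) * blkB r) i k| := by
      calc |(NormedSpace.exp (s • blkA r) * blkB r) i k|
          ≤ ∑ k, |(NormedSpace.exp (s • blkA r) * blkB r) i k| :=
            Finset.single_le_sum (f := fun k => |(NormedSpace.exp (s • blkA r) * blkB r) i k|)
              (fun _ _ => abs_nonneg _) (Finset.mem_univ k)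
        _ ≤ ∑ i, ∑ k, |(NormedSpace.exp (s • blkA r) * blkB r) i k| :=
            Finset.single_le_sum
              (f := fun i => ∑ k, |(NormedSpace.exp (s • blkA r) * blkB r) i k|)
              (fun _ _ => Finset.sum_nonneg fun _ _ => abs_nonneg _) (Finset.mem_univ i)
    exact h2.trans (le_trans (le_abs_self _) h1)
  have hK0 : 0 ≤ K :=
    le_trans (abs_nonneg _) (hKe 0 ⟨le_rfl, ht.le⟩ i0 ⟨0, hm⟩)
  obtain ⟨MA, hMA⟩ := (isCompact_Icc (a := (0:ℝ)) (b := t)).exists_bound_of_continuousOn hlA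
  obtain ⟨MB, hMB⟩ := (isCompact_Icc (a := (0:ℝ)) (b := t)).exists_bound_of_continuousOn hlB
  have hMA0 : 0 ≤ MA := le_trans (norm_nonneg _) (hMA 0 ⟨le_rfl, ht.le⟩)
  have hMB0 : 0 ≤ MB := le_trans (norm_nonneg _) (hMB 0 ⟨le_rfl, ht.le⟩)
  have huAb : ∀ s ∈ Set.Icc (0:ℝ) t, ∀ k, |uA s k| ≤ MA := by
    intro s hs k
    refine (abs_apply_le_pnorm p q hpq (uA s) k).trans ((huAc s hs).trans ?_)
    exact le_trans (le_abs_self _) ((Real.norm_eq_abs _) ▸ hMA s hs)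
  have huBb : ∀ s ∈ Set.Icc (0:ℝ) t, ∀ k, |uB s k| ≤ MB := by
    intro s hs k
    refine (abs_apply_le_pnorm p q hpq (uB s) k).trans ((huBc s hs).trans ?_)
    exact le_trans (le_abs_self _) ((Real.norm_eq_abs _) ▸ hMB s hs)
  -- measurability and integrability of φA, φB
  have hmeas : ∀ (u : ℝ → Fin m → ℝ), Measurable u →
      Measurable fun s => (NormedSpace.exp (s • blkA r) * blkB r) *ᵥ u s := by
    intro u hu
    refine measurable_pi_lambda _ fun i => ?_
    have : (fun s : ℝ => ((NormedSpace.exp (s • blkA r) * blkB r) *ᵥ u s) i)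
        = fun s : ℝ => ∑ k, (NormedSpace.exp (s • blkA r) * blkB r) i k * u s k := rfl
    rw [this]
    exact Finset.measurable_sum _ fun k _ =>
      ((hentry i k).measurable.mul ((measurable_pi_apply k).comp hu))
  have hφAm : Measurable φA := by
    rw [funext hφAF]
    exact hmeas uA huAm
  have hφBm : Measurable φB := by
    rw [funext hφBF]
    exact hmeas uB huBm
  have hbdd : ∀ (u : ℝ → Fin m → ℝ) (M : ℝ), 0 ≤ M →
      (∀ s ∈ Set.Icc (0:ℝ) t, ∀ k, |u s k| ≤ M) →
      ∀ s ∈ Set.Ioc (0:ℝ) t, ‖(NormedSpace.exp (s • blkA r) * blkB r) *ᵥ u s‖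
        ≤ (m:ℝ) * (K * M) := by
    intro u M hM0 hub s hs
    have hs' : s ∈ Set.Icc (0:ℝ) t := Set.Ioc_subset_Icc_self hs
    rw [pi_norm_le_iff_of_nonneg (by positivity)]
    intro i
    rw [Real.norm_eq_abs]
    calc |((NormedSpace.exp (s • blkA r) * blkB r) *ᵥ u s) i|
        = |∑ k, (NormedSpace.exp (s • blkA r) * blkB r) i k * u s k| := rfl
      _ ≤ ∑ k, |(NormedSpace.exp (s • blkA r) * blkB r) i k * u s k| :=
          Finset.abs_sum_le_sum_abs _ _
      _ ≤ ∑ _k : Fin m, K * M := by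
          refine Finset.sum_le_sum fun k _ => ?_
          rw [abs_mul]
          exact mul_le_mul (hKe s hs' i k) (hub s hs' k) (abs_nonneg _) hK0
      _ = (m:ℝ) * (K * M) := by
          simp [Finset.sum_const, Finset.card_univ]
  have hφAint : IntervalIntegrable φA MeasureTheory.volume 0 t := by
    rw [intervalIntegrable_iff, Set.uIoc_of_le ht.le]
    refine MeasureTheory.Measure.integrableOn_of_bounded (M := (m:ℝ) * (K * MA)) (by simp)
      hφAm.aestronglyMeasurable ?_
    rw [MeasureTheory.ae_restrict_iff' measurableSet_Ioc]
    refine MeasureTheory.ae_of_all _ fun s hs => ?_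
    rw [hφAF s]
    exact hbdd uA MA hMA0 huAb s hs
  have hφBint : IntervalIntegrable φB MeasureTheory.volume 0 t := by
    rw [intervalIntegrable_iff, Set.uIoc_of_le ht.le]
    refine MeasureTheory.Measure.integrableOn_of_bounded (M := (m:ℝ) * (K * MB)) (by simp)
      hφBm.aestronglyMeasurable ?_
    rw [MeasureTheory.ae_restrict_iff' measurableSet_Ioc]
    refine MeasureTheory.ae_of_all _ fun s hs => ?_
    rw [hφBF s]
    exact hbdd uB MB hMB0 huBb s hs
  -- the dot product with y as a continuous linear map
  set L : (((Σ j, Fin (r j)) → ℝ) →L[ℝ] ℝ) := ∑ i, y i • ContinuousLinearMap.proj i with hLdef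
  have hL : ∀ v : (Σ j, Fin (r j)) → ℝ, L v = y ⬝ᵥ v := by
    intro v
    rw [hLdef]
    simp [dotProduct]
  have hswapA : y ⬝ᵥ (∫ s in (0:ℝ)..t, φA s) = ∫ s in (0:ℝ)..t, y ⬝ᵥ φA s := by
    rw [← hL, ← L.intervalIntegral_comp_comm hφAint]
    simp_rw [hL]
  have hswapB : y ⬝ᵥ (∫ s in (0:ℝ)..t, φB s) = ∫ s in (0:ℝ)..t, y ⬝ᵥ φB s := by
    rw [← hL, ← L.intervalIntegral_comp_comm hφBint]
    simp_rw [hL]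
  have hsA : IntervalIntegrable (fun s => y ⬝ᵥ φA s) MeasureTheory.volume 0 t := by
    have h' : IntervalIntegrable (fun s => L (φA s)) MeasureTheory.volume 0 t :=
      ⟨L.integrable_comp hφAint.1, L.integrable_comp hφAint.2⟩
    simpa only [hL] using h'
  have hsB : IntervalIntegrable (fun s => y ⬝ᵥ φB s) MeasureTheory.volume 0 t := by
    have h' : IntervalIntegrable (fun s => L (φB s)) MeasureTheory.volume 0 t :=
      ⟨L.integrable_comp hφBint.1, L.integrable_comp hφBint.2⟩
    simpa only [hL] using h'
  -- integrability of the norm integrand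
  have hFty : Continuous fun s : ℝ => (NormedSpace.exp (s • blkA r) * blkB r)ᵀ *ᵥ y := by
    refine continuous_pi fun k => ?_
    have : (fun s : ℝ => (((NormedSpace.exp (s • blkA r) * blkB r)ᵀ) *ᵥ y) k)
        = fun s : ℝ => ∑ i, (NormedSpace.exp (s • blkA r) * blkB r) i k * y i := rfl
    rw [this]
    exact continuous_finset_sum _ fun i _ => (hentry i k).mul continuous_const
  have hGy : ∀ s, (G s)ᵀ *ᵥ y
      = (lA s + lB s) • ((NormedSpace.exp (s • blkA r) * blkB r)ᵀ *ᵥ y) := by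
    intro s
    rw [hG s, Matrix.transpose_smul, Matrix.smul_mulVec]
  have hGcont : ContinuousOn (fun s => pnorm q ((G s)ᵀ *ᵥ y)) (Set.Icc 0 t) := by
    refine (continuous_pnorm q).comp_continuousOn ?_
    have : (fun s : ℝ => (G s)ᵀ *ᵥ y)
        = fun s : ℝ => (lA s + lB s) • ((NormedSpace.exp (s • blkA r) * blkB r)ᵀ *ᵥ y) :=
      funext hGy
    rw [this]
    exact (hlA.add hlB).smul hFty.continuousOn
  have hGint : IntervalIntegrable (fun s => pnorm q ((G s)ᵀ *ᵥ y)) MeasureTheory.volume 0 t := by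
    apply ContinuousOn.intervalIntegrable
    rwa [Set.uIcc_of_le ht.le]
  -- pointwise bound
  have hptw : ∀ s ∈ Set.Icc (0:ℝ) t,
      y ⬝ᵥ φA s - y ⬝ᵥ φB s ≤ pnorm q ((G s)ᵀ *ᵥ y) := by
    intro s hs
    have e1 : y ⬝ᵥ φA s - y ⬝ᵥ φB s
        = ((NormedSpace.exp (s • blkA r) * blkB r)ᵀ *ᵥ y) ⬝ᵥ (uA s - uB s) := by
      rw [hφAF s, hφBF s, ← dotProduct_sub, ← Matrix.mulVec_sub,
        Matrix.dotProduct_mulVec, ← Matrix.mulVec_transpose]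
    rw [e1]
    have h2 : pnorm p (uA s - uB s) ≤ lA s + lB s :=
      (pnorm_sub_le' p _ _).trans (add_le_add (huAc s hs) (huBc s hs))
    have h3 : pnorm q ((G s)ᵀ *ᵥ y)
        = (lA s + lB s) * pnorm q ((NormedSpace.exp (s • blkA r) * blkB r)ᵀ *ᵥ y) := by
      rw [hGy s, pnorm_smul',
        abs_of_pos (by have := hlApos s hs; have := hlBpos s hs; linarith)]
    calc ((NormedSpace.exp (s • blkA r) * blkB r)ᵀ *ᵥ y) ⬝ᵥ (uA s - uB s)
        ≤ pnorm q ((NormedSpace.exp (s • blkA r) * blkB r)ᵀ *ᵥ y)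
            * pnorm p (uA s - uB s) :=
          dotProduct_le_pnorm_mul_pnorm p q hpq _ _
      _ ≤ pnorm q ((NormedSpace.exp (s • blkA r) * blkB r)ᵀ *ᵥ y) * (lA s + lB s) :=
          mul_le_mul_of_nonneg_left h2 (pnorm_nonneg' q _)
      _ = pnorm q ((G s)ᵀ *ᵥ y) := by rw [h3]; ring
  -- assemble the contradiction
  have heq2 : NormedSpace.exp (t • blkA r) *ᵥ x0A + (∫ s in (0:ℝ)..t, φA s)
      = NormedSpace.exp (t • blkA r) *ᵥ x0B + ∫ s in (0:ℝ)..t, φB s := by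
    rw [← hxAe, ← hxBe]
  have h5 := congrArg (fun v => y ⬝ᵥ v) heq2
  simp only [dotProduct_add] at h5
  rw [hswapA, hswapB] at h5
  have h6 : y ⬝ᵥ c = y ⬝ᵥ (NormedSpace.exp (t • blkA r) *ᵥ x0A)
      - y ⬝ᵥ (NormedSpace.exp (t • blkA r) *ᵥ x0B) := by
    rw [hc, Matrix.mulVec_sub, dotProduct_sub]
  have hmono := intervalIntegral.integral_mono_on ht.le (hsA.sub hsB) hGint hptw
  rw [intervalIntegral.integral_sub hsA hsB] at hmono
  have h7 : 0 ≤ f0 y := by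
    rw [hf0y, dotProduct_comm c y]
    linarith
  exact absurd h7 (not_le.mpr hfy)
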